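/- Let R, X be real symmetric with R positive definite, let v_1,…,v_n be R-orthonormal generalized eigenvectors with eigenvalues λ_k, and let V ∈ ℝⁿ. Then the solution I of (R + iX) I = V satisfies Re(Iᴴ V) = Σ_k |v_kᵀ V|² / (1 + λ_k²) ≥ 0. -/

import Mathlib

open Matrix Complex

theorem stmt_19 (n : ℕ) (R X : Matrix (Fin n) (Fin n) ℝ)
    (hR : R.IsSymm) (hX : X.IsSymm) (hRpd : R.PosDef)
    (v : Fin n → (Fin n → ℝ)) (lam : Fin n → ℝ)
    (heig : ∀ k, X *ᵥ v k = lam k • (R *ᵥ v k))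
    (hortho : ∀ j k, v j ⬝ᵥ (R *ᵥ v k) = if j = k then 1 else 0)
    (V : Fin n → ℝ) (I : Fin n → ℂ)
    (hsol : (R.map Complex.ofReal + Complex.I • X.map Complex.ofReal) *ᵥ I
        = fun i => ((V i : ℂ))) :
    ((star I) ⬝ᵥ (fun i => ((V i : ℂ)))).re
        = ∑ k, (v k ⬝ᵥ V) ^ 2 / (1 + (lam k) ^ 2) ∧
    0 ≤ ((star I) ⬝ᵥ (fun i => ((V i : ℂ)))).re := by
  classical
  set M : Matrix (Fin n) (Fin n) ℂ := R.map Complex.ofReal + Complex.I • X.map Complex.ofReal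
    with hMdef
  set c : Fin n → ℝ := fun k => v k ⬝ᵥ V with hc
  -- nonvanishing denominators
  have hden : ∀ k, (1 : ℂ) + Complex.I * lam k ≠ 0 := by
    intro k h
    have := congrArg Complex.re h
    simp at this
  have hden' : ∀ k, (1 : ℂ) - Complex.I * lam k ≠ 0 := by
    intro k h
    have := congrArg Complex.re h
    simp at this
  -- the candidate solution
  set I' : Fin n → ℂ := fun i => ∑ k, ((c k : ℂ) / (1 + Complex.I * lam k)) * (v k i) with hI'
  -- completeness of the R-orthonormal system
  have hcomp : ∀ i, ∑ k, c k * (R *ᵥ v k) i = V i := by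
    intro i
    have hB : (Matrix.of v) * (R * (Matrix.of v)ᵀ) = 1 := by
      ext j k
      have := hortho j k
      simp only [Matrix.mulVec, dotProduct, Matrix.mul_apply, Matrix.one_apply,
        Matrix.transpose_apply, Matrix.of_apply, Finset.mul_sum] at this ⊢
      rw [← this]
    have hB2 : (R * (Matrix.of v)ᵀ) * (Matrix.of v) = 1 := mul_eq_one_comm.mp hB
    have h := congrFun (congrArg (· *ᵥ V) hB2) i
    simp only [Matrix.one_mulVec] at h
    rw [hc]
    rw [← h, ← Matrix.mulVec_mulVec]
    simp only [Matrix.mulVec, dotProduct, Matrix.mul_apply, Matrix.transpose_apply,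
      Matrix.of_apply, Finset.sum_mul, Finset.mul_sum]
    apply Finset.sum_congr rfl; intro k _; rw [Finset.sum_comm]
    apply Finset.sum_congr rfl; intro a _
    apply Finset.sum_congr rfl; intro b _; ring
  -- action of M on complexified eigenvectors
  have hMvk : ∀ k, M *ᵥ (fun j => ((v k j : ℂ)))
      = fun i => (1 + Complex.I * lam k) * ((R *ᵥ v k) i : ℂ) := by
    intro k
    funext i
    have hXk := congrFun (heig k) i
    simp only [Pi.smul_apply, smul_eq_mul] at hXk
    have h1 : (R.map Complex.ofReal *ᵥ fun j => ((v k j : ℂ))) i = ((R *ᵥ v k) i : ℂ) := by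
      simp only [Matrix.mulVec, dotProduct, Matrix.map_apply]
      push_cast
      rfl
    have h2 : (X.map Complex.ofReal *ᵥ fun j => ((v k j : ℂ))) i = ((X *ᵥ v k) i : ℂ) := by
      simp only [Matrix.mulVec, dotProduct, Matrix.map_apply]
      push_cast
      rfl
    rw [hMdef]
    simp only [Matrix.add_mulVec, Matrix.smul_mulVec, Pi.add_apply, Pi.smul_apply,
      smul_eq_mul, h1, h2, hXk]
    push_cast
    ring
  -- M *ᵥ I' = V
  have hMI' : M *ᵥ I' = fun i => ((V i : ℂ)) := by
    funext i
    have expand : (M *ᵥ I') i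
        = ∑ k, ((c k : ℂ) / (1 + Complex.I * lam k)) * (M *ᵥ (fun j => ((v k j : ℂ)))) i := by
      simp only [Matrix.mulVec, dotProduct, hI', Finset.mul_sum]
      rw [Finset.sum_comm]
      apply Finset.sum_congr rfl; intro k _
      apply Finset.sum_congr rfl; intro j _
      ring
    rw [expand]
    have : ∀ k, ((c k : ℂ) / (1 + Complex.I * lam k)) * (M *ᵥ (fun j => ((v k j : ℂ)))) i
        = (c k : ℂ) * ((R *ᵥ v k) i : ℂ) := by
      intro k
      rw [hMvk k, div_mul_eq_mul_div, mul_div_assoc, mul_div_cancel_left₀ _ (hden k)]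
    rw [Finset.sum_congr rfl fun k _ => this k]
    rw [← hcomp i]
    push_cast
    rfl
  -- uniqueness: I = I'
  have hIeq : I = I' := by
    set w : Fin n → ℂ := fun i => I i - I' i with hw
    have hMw : M *ᵥ w = 0 := by
      have : M *ᵥ w = M *ᵥ I - M *ᵥ I' := by
        rw [hw, ← Matrix.mulVec_sub]
        rfl
      rw [this, hsol, hMI', sub_self]
    set x : Fin n → ℝ := fun i => (w i).re with hx
    set y : Fin n → ℝ := fun i => (w i).im with hy
    have hre : ∀ i, (R *ᵥ x) i - (X *ᵥ y) i = 0 := by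
      intro i
      have h0 := congrFun hMw i
      simp only [hMdef, Matrix.mulVec, dotProduct, Matrix.add_apply, Matrix.smul_apply,
        Matrix.map_apply, smul_eq_mul, Pi.zero_apply] at h0
      have := congrArg Complex.re h0
      rw [Complex.re_sum] at this
      simp only [add_mul, Complex.add_re, Complex.add_im, Complex.mul_re, Complex.ofReal_re,
        Complex.ofReal_im, Complex.I_re, Complex.I_im, Complex.mul_im, Complex.zero_re] at this
      simp only [Matrix.mulVec, dotProduct, hx, hy]
      rw [← Finset.sum_sub_distrib]
      rw [← this]
      apply Finset.sum_congr rfl; intro j _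
      ring
    have him : ∀ i, (X *ᵥ x) i + (R *ᵥ y) i = 0 := by
      intro i
      have h0 := congrFun hMw i
      simp only [hMdef, Matrix.mulVec, dotProduct, Matrix.add_apply, Matrix.smul_apply,
        Matrix.map_apply, smul_eq_mul, Pi.zero_apply] at h0
      have := congrArg Complex.im h0
      rw [Complex.im_sum] at this
      simp only [add_mul, Complex.add_re, Complex.add_im, Complex.mul_re, Complex.ofReal_re,
        Complex.ofReal_im, Complex.I_re, Complex.I_im, Complex.mul_im, Complex.zero_im] at this
      simp only [Matrix.mulVec, dotProduct, hx, hy]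
      rw [← Finset.sum_add_distrib]
      rw [← this]
      apply Finset.sum_congr rfl; intro j _
      ring
    have hRx : R *ᵥ x = X *ᵥ y := by
      funext i; have := hre i; linarith
    have hXx : X *ᵥ x = -(R *ᵥ y) := by
      funext i; have := him i; simp only [Pi.neg_apply]; linarith
    have hab : x ⬝ᵥ (R *ᵥ x) = -(y ⬝ᵥ (R *ᵥ y)) := by
      rw [hRx, Matrix.dotProduct_mulVec, ← Matrix.mulVec_transpose, hX.eq, hXx]
      rw [neg_dotProduct, dotProduct_comm]
    have hxnn : 0 ≤ x ⬝ᵥ (R *ᵥ x) := by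
      have := hRpd.posSemidef.dotProduct_mulVec_nonneg x
      simpa using this
    have hynn : 0 ≤ y ⬝ᵥ (R *ᵥ y) := by
      have := hRpd.posSemidef.dotProduct_mulVec_nonneg y
      simpa using this
    have hx0 : x = 0 := by
      by_contra hne
      have := hRpd.dotProduct_mulVec_pos hne
      simp only [star_trivial] at this
      nlinarith [hab, hynn]
    have hy0 : y = 0 := by
      by_contra hne
      have := hRpd.dotProduct_mulVec_pos hne
      simp only [star_trivial] at this
      have hx0' : x ⬝ᵥ (R *ᵥ x) = 0 := by rw [hx0]; simp
      nlinarith [hab]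
    funext i
    have h1 : (w i).re = 0 := congrFun hx0 i
    have h2 : (w i).im = 0 := congrFun hy0 i
    have : w i = 0 := Complex.ext h1 h2
    have := sub_eq_zero.mp this
    exact this
  -- final computation
  have hdot : ((star I) ⬝ᵥ (fun i => ((V i : ℂ))))
      = ∑ k, ((c k : ℂ) / (1 - Complex.I * lam k)) * (c k : ℂ) := by
    rw [hIeq]
    simp only [dotProduct, Pi.star_apply, hI', star_sum, star_mul', star_div₀,
      Complex.star_def, Complex.conj_ofReal, map_add, _root_.map_one, _root_.map_mul, Complex.conj_I,
      Finset.sum_mul]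
    rw [Finset.sum_comm]
    apply Finset.sum_congr rfl; intro k _
    rw [hc]
    simp only [dotProduct]
    push_cast
    rw [Finset.mul_sum]
    apply Finset.sum_congr rfl; intro i _
    ring
  have hterm : ∀ k, (((c k : ℂ) / (1 - Complex.I * lam k)) * (c k : ℂ)).re
      = c k ^ 2 / (1 + lam k ^ 2) := by
    intro k
    have hm : (1 + Complex.I * (lam k : ℂ)) * (1 - Complex.I * lam k)
        = ((1 + lam k ^ 2 : ℝ) : ℂ) := by
      push_cast
      ring_nf
      rw [Complex.I_sq]
      ring
    have key : ((c k : ℂ) / (1 - Complex.I * lam k)) * (c k : ℂ)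
        = ((c k ^ 2 / (1 + lam k ^ 2) : ℝ) : ℂ) * (1 + Complex.I * lam k) := by
      rw [div_mul_eq_mul_div, div_eq_iff (hden' k), mul_assoc, hm]
      norm_cast
      rw [div_mul_cancel₀ _ (by positivity : (1 : ℝ) + lam k ^ 2 ≠ 0)]
      ring
    rw [key, Complex.mul_re, Complex.ofReal_re, Complex.ofReal_im]
    simp
  have hre : ((star I) ⬝ᵥ (fun i => ((V i : ℂ)))).re
      = ∑ k, (v k ⬝ᵥ V) ^ 2 / (1 + (lam k) ^ 2) := by
    rw [hdot, Complex.re_sum]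
    exact Finset.sum_congr rfl fun k _ => hterm k
  refine ⟨hre, ?_⟩
  rw [hre]
  apply Finset.sum_nonneg
  intro k _
  positivity
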